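/- Let μ and ν^j (j ∈ [k]) be as above and let ν be the uniform mixture of ν^0,...,ν^{k-1}. For every good assignment α of weight at most k/2, Pr_{f~μ}[f agrees with α] ≤ 2 · Pr_{g~ν}[g agrees with α]. -/

import Mathlib

open Finset
open scoped ENNReal


/-- Index type for binary strings of length `< k`. -/
abbrev PrefixIdx (k : ℕ) := Σ i : Fin k, Fin (2 ^ (i : ℕ))

/-- Independent uniform samples `a_s ∈ {0,…,m-2}` for each binary string `s` of
length `< k` (degenerates if `m ≤ 1`). -/
noncomputable def aDist (m k : ℕ) : PMF (PrefixIdx k → ℕ) :=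
  if h : (Fintype.piFinset fun _ : PrefixIdx k => Finset.range (m - 1)).Nonempty then
    PMF.uniformOfFinset _ h
  else PMF.pure fun _ => 0

/-- `f x` has `i`-th `m`-ary digit `a_s + b` (digit 0 most significant), where
`s` is the length-`i` prefix of the `k`-bit string `x` and `b` is bit `i` of `x`. -/
def digitFun (m k : ℕ) (a : PrefixIdx k → ℕ) (x : ℕ) : ℕ :=
  ∑ i : Fin k,
    (a ⟨i, ⟨x / 2 ^ (k - (i : ℕ)) % 2 ^ (i : ℕ),
        Nat.mod_lt _ (Nat.two_pow_pos _)⟩⟩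
      + (x.testBit (k - 1 - (i : ℕ))).toNat) * m ^ (k - 1 - (i : ℕ))

/-- A value in `[m^k]` is good if none of its `m`-ary digits is `0` or `m-1`. -/
def GoodVal (m k v : ℕ) : Prop :=
  ∀ i < k, v / m ^ (k - 1 - i) % m ≠ 0 ∧ v / m ^ (k - 1 - i) % m ≠ m - 1

/-- `ν`, the uniform mixture over `j ∈ [k]` of the distributions `ν^j` of
`x ↦ f (x XOR 2^(k-1-j))` for `f ~ μ` (degenerates to `μ` if `k = 0`). -/
noncomputable def nuMix (m k : ℕ) : PMF (ℕ → ℕ) :=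
  if h : (Finset.range k).Nonempty then
    (PMF.uniformOfFinset _ h).bind fun j =>
      (aDist m k).map fun a x => digitFun m k a (x ^^^ 2 ^ (k - 1 - j))
  else (aDist m k).map (digitFun m k)



open Finset
open scoped ENNReal

lemma sum_lt_pow {m k : ℕ} (hm : 1 ≤ m) (c : ℕ → ℕ) (hc : ∀ i < k, c i < m) :
    ∑ i ∈ range k, c i * m ^ i < m ^ k := by
  induction k with
  | zero => simpa using hm
  | succ k ih =>
    rw [Finset.sum_range_succ, pow_succ]
    have h1 : ∑ i ∈ range k, c i * m ^ i < m ^ k := ih fun i hi => hc i (by omega)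
    have h2 : c k ≤ m - 1 := by have := hc k (by omega); omega
    have hpos : 1 ≤ m ^ k := Nat.one_le_pow _ _ (by omega)
    have h3 : c k * m ^ k ≤ (m - 1) * m ^ k := Nat.mul_le_mul_right _ h2
    have h4 : (m - 1) * m ^ k + m ^ k = m ^ k * m := by
      rw [Nat.sub_one_mul, mul_comm]
      have : m ^ k ≤ m ^ k * m := Nat.le_mul_of_pos_right _ (by omega)
      omega
    omega

lemma digit_of_sum {m : ℕ} (hm : 1 ≤ m) {k : ℕ} (c : ℕ → ℕ) (hc : ∀ i < k, c i < m)
    {t : ℕ} (ht : t < k) :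
    (∑ i ∈ range k, c i * m ^ i) / m ^ t % m = c t := by
  have hsplit : ∑ i ∈ range k, c i * m ^ i
      = (∑ i ∈ range t, c i * m ^ i)
        + m ^ t * (c t + m * ∑ i ∈ range (k - t - 1), c (t + 1 + i) * m ^ i) := by
    have hk : k = t + 1 + (k - t - 1) := by omega
    rw [hk, Finset.sum_range_add, Finset.sum_range_succ, mul_add, Finset.mul_sum,
      Finset.mul_sum, add_assoc]
    congr 1
    congr 1
    · ring
    · apply Finset.sum_congr (by congr 1; omega)
      intro i _
      rw [pow_add, pow_succ]
      ring
  rw [hsplit]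
  have hL : ∑ i ∈ range t, c i * m ^ i < m ^ t := sum_lt_pow hm c fun i hi => hc i (by omega)
  rw [Nat.add_mul_div_left _ _ (pow_pos (by omega) t), Nat.div_eq_of_lt hL, zero_add,
    Nat.add_mul_mod_self_left, Nat.mod_eq_of_lt (hc t ht)]

lemma sum_digits_self {m k v : ℕ} (hm : 1 ≤ m) (hv : v < m ^ k) :
    ∑ i ∈ range k, (v / m ^ i % m) * m ^ i = v := by
  induction k generalizing v with
  | zero => simp at hv ⊢; omega
  | succ k ih =>
    rw [Finset.sum_range_succ']
    have h2 : (v / m) < m ^ k := by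
      rw [Nat.div_lt_iff_lt_mul (by omega)]
      calc v < m ^ (k+1) := hv
        _ = m ^ k * m := pow_succ m k
    have key : ∑ i ∈ range k, v / m ^ (i + 1) % m * m ^ (i + 1)
        = m * ∑ i ∈ range k, (v / m) / m ^ i % m * m ^ i := by
      rw [Finset.mul_sum]
      apply Finset.sum_congr rfl
      intro i _
      rw [show m ^ (i+1) = m * m ^ i from pow_succ' m i, ← Nat.div_div_eq_div_mul]
      ring
    rw [key, ih h2]
    simp [Nat.div_add_mod]

def pIdx (k i : ℕ) (hi : i < k) (x : ℕ) : PrefixIdx k :=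
  ⟨⟨i, hi⟩, ⟨x / 2 ^ (k - i) % 2 ^ i, Nat.mod_lt _ (Nat.two_pow_pos _)⟩⟩

lemma digitFun_eq_sum (m k : ℕ) (a : PrefixIdx k → ℕ) (x : ℕ) :
    digitFun m k a x = ∑ t ∈ range k,
      (fun i => if h : i < k then a (pIdx k i h x) + (x.testBit (k - 1 - i)).toNat else 0)
        (k - 1 - t) * m ^ t := by
  set c : ℕ → ℕ := fun i =>
    if h : i < k then a (pIdx k i h x) + (x.testBit (k - 1 - i)).toNat else 0 with hc
  have h1 : digitFun m k a x = ∑ i ∈ range k, c i * m ^ (k - 1 - i) := by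
    rw [digitFun, ← Fin.sum_univ_eq_sum_range (fun i => (c i) * m ^ (k - 1 - i))]
    apply Finset.sum_congr rfl
    intro i _
    congr 1
    rw [hc]
    simp only [i.isLt, dif_pos]
    rfl
  rw [h1, ← Finset.sum_range_reflect]
  apply Finset.sum_congr rfl
  intro t ht
  simp only [Finset.mem_range] at ht
  have : k - 1 - (k - 1 - t) = t := by omega
  rw [this]

lemma digitFun_digit {m k : ℕ} (hm : 2 ≤ m) {a : PrefixIdx k → ℕ}
    (ha : ∀ p, a p ≤ m - 2) (x : ℕ) {i : ℕ} (hi : i < k) :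
    digitFun m k a x / m ^ (k - 1 - i) % m
      = a (pIdx k i hi x) + (x.testBit (k - 1 - i)).toNat := by
  rw [digitFun_eq_sum]
  have hb : ∀ t < k, (fun i => if h : i < k then
      a (pIdx k i h x) + (x.testBit (k - 1 - i)).toNat else 0) (k - 1 - t) < m := by
    intro t ht
    have h : k - 1 - t < k := by omega
    simp only [h, dif_pos]
    have := ha (pIdx k (k - 1 - t) h x)
    cases x.testBit (k - 1 - (k - 1 - t)) <;> simp <;> omega
  rw [digit_of_sum (by omega) _ hb (by omega : k - 1 - i < k)]
  have h2 : k - 1 - (k - 1 - i) = i := by omega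
  simp only [h2, hi, dif_pos]

lemma digitFun_lt {m k : ℕ} (hm : 2 ≤ m) {a : PrefixIdx k → ℕ}
    (ha : ∀ p, a p ≤ m - 2) (x : ℕ) : digitFun m k a x < m ^ k := by
  rw [digitFun_eq_sum]
  apply sum_lt_pow (by omega)
  intro t ht
  by_cases h : k - 1 - t < k
  · simp only [h, dif_pos]
    have := ha (pIdx k (k - 1 - t) h x)
    cases x.testBit (k - 1 - (k - 1 - t)) <;> simp <;> omega
  · simp only [h, dif_neg, not_false_iff]; omega

lemma digitFun_eq_iff {m k : ℕ} (hm : 2 ≤ m) {a : PrefixIdx k → ℕ}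
    (ha : ∀ p, a p ≤ m - 2) (x : ℕ) {v : ℕ} (hv : v < m ^ k) :
    digitFun m k a x = v ↔
      ∀ i (hi : i < k), a (pIdx k i hi x) + (x.testBit (k - 1 - i)).toNat
        = v / m ^ (k - 1 - i) % m := by
  constructor
  · intro h i hi
    rw [← h, digitFun_digit hm ha x hi]
  · intro h
    rw [digitFun_eq_sum, ← sum_digits_self (show 1 ≤ m by omega) hv]
    apply Finset.sum_congr rfl
    intro t ht
    simp only [Finset.mem_range] at ht
    have h1 : k - 1 - t < k := by omega
    have h2 : k - 1 - (k - 1 - t) = t := by omega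
    simp only [h1, dif_pos]
    rw [h (k - 1 - t) h1, h2]

lemma bit_xor_pow {k j i x : ℕ} (hj : j < k) (hi : i < k) :
    (x ^^^ 2 ^ (k - 1 - j)).testBit (k - 1 - i)
      = (x.testBit (k - 1 - i)).xor (decide (i = j)) := by
  rw [Nat.testBit_xor, Nat.testBit_two_pow]
  congr 1
  exact decide_eq_decide.mpr (by omega)

lemma pref_xor_of_le {k j i x : ℕ} (hj : j < k) (hij : i ≤ j) :
    (x ^^^ 2 ^ (k - 1 - j)) / 2 ^ (k - i) % 2 ^ i = x / 2 ^ (k - i) % 2 ^ i := by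
  apply Nat.eq_of_testBit_eq
  intro t
  simp only [Nat.testBit_mod_two_pow, ← Nat.shiftRight_eq_div_pow, Nat.testBit_shiftRight,
    Nat.testBit_xor, Nat.testBit_two_pow]
  by_cases htl : t < i
  · have hne : ¬(k - 1 - j = k - i + t) := by omega
    simp [htl, hne]
  · simp [htl]

lemma pref_xor_of_gt {k j i x : ℕ} (hj : j < k) (hi : i ≤ k) (hij : j < i) :
    (x ^^^ 2 ^ (k - 1 - j)) / 2 ^ (k - i) % 2 ^ i
      = (x / 2 ^ (k - i) % 2 ^ i) ^^^ 2 ^ (i - 1 - j) := by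
  apply Nat.eq_of_testBit_eq
  intro t
  simp only [Nat.testBit_mod_two_pow, ← Nat.shiftRight_eq_div_pow, Nat.testBit_shiftRight,
    Nat.testBit_xor, Nat.testBit_two_pow]
  by_cases htl : t < i
  · have : decide (k - 1 - j = k - i + t) = decide (i - 1 - j = t) :=
      decide_eq_decide.mpr (by omega)
    simp [htl, this]
  · have hne : ¬(i - 1 - j = t) := by omega
    simp [htl, hne]

open Classical in
noncomputable def cutSet (k : ℕ) (S : Finset ℕ) : Finset ℕ :=
  (Finset.range k).filter fun j =>
    ∃ x ∈ S, ∃ y ∈ S, x / 2 ^ (k - j) = y / 2 ^ (k - j) ∧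
      x.testBit (k - 1 - j) ≠ y.testBit (k - 1 - j)

lemma lt_of_bits {k j x y : ℕ} (hj : j < k) (hdiv : x / 2 ^ (k - j) = y / 2 ^ (k - j))
    (hbx : x.testBit (k - 1 - j) = false) (hby : y.testBit (k - 1 - j) = true) : x < y := by
  set d := k - 1 - j with hd
  have hd1 : d + 1 = k - j := by omega
  rw [Nat.testBit_eq_decide_div_mod_eq] at hbx hby
  have hx2 : x / 2 ^ d % 2 = 0 := by
    rcases Nat.mod_two_eq_zero_or_one (x / 2 ^ d) with h | h
    · exact h
    · simp [h] at hbx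
  have hy2 : y / 2 ^ d % 2 = 1 := by simpa using hby
  have hxd : x / 2 ^ d / 2 = x / 2 ^ (d + 1) := by
    rw [Nat.div_div_eq_div_mul, pow_succ]
  have hyd : y / 2 ^ d / 2 = y / 2 ^ (d + 1) := by
    rw [Nat.div_div_eq_div_mul, pow_succ]
  rw [hd1] at hxd hyd
  have hxe := Nat.div_add_mod (x / 2 ^ d) 2
  have hye := Nat.div_add_mod (y / 2 ^ d) 2
  have hyx : y / 2 ^ d = x / 2 ^ d + 1 := by omega
  have h1 := Nat.div_add_mod x (2 ^ d)
  have h2 : x % 2 ^ d < 2 ^ d := Nat.mod_lt _ (Nat.two_pow_pos d)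
  have h3 : y / 2 ^ d * 2 ^ d ≤ y := Nat.div_mul_le_self _ _
  nlinarith [Nat.two_pow_pos d]

lemma det_of_div {k j j' x y : ℕ} (hjj : j < j') (hj' : j' ≤ k)
    (h : x / 2 ^ (k - j') = y / 2 ^ (k - j')) :
    x / 2 ^ (k - j) = y / 2 ^ (k - j) ∧ x.testBit (k - 1 - j) = y.testBit (k - 1 - j) := by
  constructor
  · rw [show k - j = (k - j') + (j' - j) by omega, pow_add, ← Nat.div_div_eq_div_mul,
      ← Nat.div_div_eq_div_mul, h]
  · have h2 := congrArg (fun z => z.testBit (j' - 1 - j)) h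
    simp only [← Nat.shiftRight_eq_div_pow, Nat.testBit_shiftRight] at h2
    have he : k - j' + (j' - 1 - j) = k - 1 - j := by omega
    rwa [he] at h2

lemma cutSet_card_le (k : ℕ) (S : Finset ℕ) : (cutSet k S).card ≤ S.card - 1 := by
  classical
  rcases (cutSet k S).eq_empty_or_nonempty with h | h
  · simp [h]
  · -- S is nonempty
    obtain ⟨j0, hj0⟩ := h
    have hSne : S.Nonempty := by
      simp only [cutSet, Finset.mem_filter] at hj0
      obtain ⟨x, hx, -⟩ := hj0.2
      exact ⟨x, hx⟩
    set B : ℕ → Finset ℕ := fun j => S.filter fun y =>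
      y.testBit (k - 1 - j) = true ∧ ∃ x ∈ S, x / 2 ^ (k - j) = y / 2 ^ (k - j) ∧
        x.testBit (k - 1 - j) = false with hB
    have hBne : ∀ j ∈ cutSet k S, (B j).Nonempty := by
      intro j hj
      simp only [cutSet, Finset.mem_filter, Finset.mem_range] at hj
      obtain ⟨hjk, x, hx, y, hy, hdiv, hne⟩ := hj
      cases hbx : x.testBit (k - 1 - j) <;> cases hby : y.testBit (k - 1 - j)
      · simp [hbx, hby] at hne
      · exact ⟨y, Finset.mem_filter.2 ⟨hy, hby, x, hx, hdiv, hbx⟩⟩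
      · exact ⟨x, Finset.mem_filter.2 ⟨hx, hbx, y, hy, hdiv.symm, hby⟩⟩
      · simp [hbx, hby] at hne
    set f : ℕ → ℕ := fun j => if hj : (B j).Nonempty then (B j).min' hj else 0 with hf
    have hmem : ∀ j ∈ cutSet k S, f j ∈ S.erase (S.min' hSne) := by
      intro j hj
      have hne := hBne j hj
      have hjk : j < k := by
        simp only [cutSet, Finset.mem_filter, Finset.mem_range] at hj; exact hj.1
      simp only [hf, dif_pos hne]
      have hmin := Finset.min'_mem (B j) hne
      simp only [hB, Finset.mem_filter] at hmin
      obtain ⟨hyS, hby, x, hxS, hdiv, hbx⟩ := hmin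
      refine Finset.mem_erase.2 ⟨?_, hyS⟩
      intro hcon
      have hxy : x < (B j).min' hne := lt_of_bits hjk hdiv hbx hby
      have : S.min' hSne ≤ x := Finset.min'_le _ _ hxS
      omega
    -- injectivity
    have hinj : Set.InjOn f ↑(cutSet k S) := by
      have key : ∀ j ∈ cutSet k S, ∀ j' ∈ cutSet k S, j < j' → f j ≠ f j' := by
        intro j hj j' hj' hlt heq
        have hnej := hBne j hj
        have hnej' := hBne j' hj'
        have hjk : j < k := by
          simp only [cutSet, Finset.mem_filter, Finset.mem_range] at hj; exact hj.1
        have hj'k : j' < k := by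
          simp only [cutSet, Finset.mem_filter, Finset.mem_range] at hj'; exact hj'.1
        simp only [hf, dif_pos hnej, dif_pos hnej'] at heq
        set y := (B j).min' hnej with hy
        have hymem := Finset.min'_mem (B j) hnej
        have hymem' := Finset.min'_mem (B j') hnej'
        rw [← heq] at hymem'
        simp only [hB, Finset.mem_filter] at hymem hymem'
        obtain ⟨hyS, hbyj, x0, hx0S, hdiv0, hbx0⟩ := hymem
        obtain ⟨-, hbyj', x', hx'S, hdiv', hbx'⟩ := hymem'
        -- x' < y, and x' ∈ B j, contradicting minimality
        have hx'y : x' < y := lt_of_bits hj'k hdiv' hbx' hbyj'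
        obtain ⟨hd, hb⟩ := det_of_div hlt (le_of_lt hj'k) hdiv'
        -- x' has same level-j prefix as y and bit_j x' = bit_j y = true
        have hx'B : x' ∈ B j := by
          refine Finset.mem_filter.2 ⟨hx'S, ?_, x0, hx0S, ?_, hbx0⟩
          · rw [hb, hbyj]
          · rw [hdiv0, hd]
        have := Finset.min'_le (B j) x' hx'B
        omega
      intro j hj j' hj' heq
      by_contra hne
      rcases Nat.lt_or_ge j j' with h | h
      · exact key j (by simpa using hj) j' (by simpa using hj') h heq
      · have : j' < j := by omega
        exact key j' (by simpa using hj') j (by simpa using hj) this heq.symm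
    have := Finset.card_le_card_of_injOn f hmem hinj
    rw [Finset.card_erase_of_mem (Finset.min'_mem _ _)] at this
    exact this

lemma pIdx_eq_mk {k i x : ℕ} (hi : i < k) {s : Fin (2 ^ i)}
    (h : x / 2 ^ (k - i) % 2 ^ i = s.val) : pIdx k i hi x = ⟨⟨i, hi⟩, s⟩ := by
  unfold pIdx
  congr 1
  exact Fin.ext h

lemma pIdx_congr {k i : ℕ} (hi : i < k) {x y : ℕ}
    (h : x / 2 ^ (k - i) % 2 ^ i = y / 2 ^ (k - i) % 2 ^ i) :
    pIdx k i hi x = pIdx k i hi y := by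
  unfold pIdx
  congr 1
  exact Fin.ext h

open Classical in
noncomputable def phiMap (k j : ℕ) (S : Finset ℕ) (up : Bool)
    (a : PrefixIdx k → ℕ) : PrefixIdx k → ℕ := fun p =>
  if _hij : (p.1 : ℕ) = j then
    if hcon : ∃ x ∈ S, x / 2 ^ (k - j) % 2 ^ j = (p.2 : ℕ) then
      if hcon.choose.testBit (k - 1 - j) = up then a p - 1 else a p + 1
    else a p
  else if hgt : j < (p.1 : ℕ) then
    a ⟨p.1, ⟨(p.2 : ℕ) ^^^ 2 ^ ((p.1 : ℕ) - 1 - j),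
      Nat.xor_lt_two_pow p.2.isLt (Nat.pow_lt_pow_right one_lt_two (by omega))⟩⟩
  else a p

lemma phiMap_lt {k j : ℕ} (S : Finset ℕ) (up : Bool) (a : PrefixIdx k → ℕ)
    {i x : ℕ} (hi : i < k) (hij : i < j) :
    phiMap k j S up a (pIdx k i hi x) = a (pIdx k i hi x) := by
  rw [phiMap, dif_neg (by simp [pIdx]; omega), dif_neg (by simp [pIdx]; omega)]

lemma phiMap_gt {k j : ℕ} (hjk : j < k) (S : Finset ℕ) (up : Bool) (a : PrefixIdx k → ℕ)
    {i x : ℕ} (hi : i < k) (hij : j < i) :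
    phiMap k j S up a (pIdx k i hi x) = a (pIdx k i hi (x ^^^ 2 ^ (k - 1 - j))) := by
  rw [phiMap, dif_neg (by simp [pIdx]; omega), dif_pos (by simpa [pIdx] using hij)]
  congr 1
  exact (pIdx_eq_mk hi (by
    rw [pref_xor_of_gt hjk (le_of_lt hi) hij]
    rfl)).symm

lemma phiMap_eqj {k j : ℕ} (hjk : j < k) {S : Finset ℕ} (up : Bool) (a : PrefixIdx k → ℕ)
    {x : ℕ} (hx : x ∈ S)
    (hu : ∀ x ∈ S, ∀ y ∈ S, x / 2 ^ (k - j) % 2 ^ j = y / 2 ^ (k - j) % 2 ^ j →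
      x.testBit (k - 1 - j) = y.testBit (k - 1 - j)) :
    phiMap k j S up a (pIdx k j hjk x) =
      if x.testBit (k - 1 - j) = up then a (pIdx k j hjk x) - 1
      else a (pIdx k j hjk x) + 1 := by
  have hcon : ∃ z ∈ S, z / 2 ^ (k - j) % 2 ^ j = (((pIdx k j hjk x).2 : ℕ)) := ⟨x, hx, rfl⟩
  rw [phiMap, dif_pos (by simp [pIdx])]
  rw [dif_pos hcon]
  have hb : hcon.choose.testBit (k - 1 - j) = x.testBit (k - 1 - j) :=
    hu _ hcon.choose_spec.1 _ hx hcon.choose_spec.2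
  rw [hb]
lemma phiMap_eqj_free {k j : ℕ} (hjk : j < k) {S : Finset ℕ} (up : Bool)
    (a : PrefixIdx k → ℕ) {x : ℕ}
    (hcon : ¬ ∃ z ∈ S, z / 2 ^ (k - j) % 2 ^ j = x / 2 ^ (k - j) % 2 ^ j) :
    phiMap k j S up a (pIdx k j hjk x) = a (pIdx k j hjk x) := by
  rw [phiMap, dif_pos (by simp [pIdx])]
  exact dif_neg hcon

lemma card_filter_eq (m k j : ℕ) (hm : 2 ≤ m) (hjk : j < k) (S : Finset ℕ)
    (hS : ∀ x ∈ S, x < 2 ^ k) (α : ℕ → ℕ) (hval : ∀ x ∈ S, α x < m ^ k)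
    (hgood : ∀ x ∈ S, GoodVal m k (α x))
    (hu : ∀ x ∈ S, ∀ y ∈ S, x / 2 ^ (k - j) % 2 ^ j = y / 2 ^ (k - j) % 2 ^ j →
      x.testBit (k - 1 - j) = y.testBit (k - 1 - j)) :
    ((Fintype.piFinset fun _ : PrefixIdx k => Finset.range (m - 1)).filter
        fun a => ∀ x ∈ S, digitFun m k a (x ^^^ 2 ^ (k - 1 - j)) = α x).card
    = ((Fintype.piFinset fun _ : PrefixIdx k => Finset.range (m - 1)).filter
        fun a => ∀ x ∈ S, digitFun m k a x = α x).card := by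
  classical
  have hd : ∀ x ∈ S, ∀ i < k, 1 ≤ α x / m ^ (k - 1 - i) % m ∧
      α x / m ^ (k - 1 - i) % m ≤ m - 2 := by
    intro x hx i hi
    have h1 := (hgood x hx) i hi
    have h2 : α x / m ^ (k - 1 - i) % m < m := Nat.mod_lt _ (by omega)
    omega
  have hbite : ∀ (x i : ℕ), i < k → (x ^^^ 2 ^ (k - 1 - j)).testBit (k - 1 - i)
      = (x.testBit (k - 1 - i)).xor (decide (i = j)) := fun x i hi => bit_xor_pow hjk hi
  have hbitj : ∀ x : ℕ, (x ^^^ 2 ^ (k - 1 - j)).testBit (k - 1 - j)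
      = !(x.testBit (k - 1 - j)) := by
    intro x
    rw [hbite x j hjk]
    simp
  have hbitne : ∀ (x i : ℕ), i < k → i ≠ j →
      (x ^^^ 2 ^ (k - 1 - j)).testBit (k - 1 - i) = x.testBit (k - 1 - i) := by
    intro x i hi hne
    rw [hbite x i hi]
    simp [hne]
  have hrep : ∀ (i : ℕ) (hik : i < k) (s : Fin (2 ^ i)),
      ((s : ℕ) * 2 ^ (k - i)) / 2 ^ (k - i) % 2 ^ i = (s : ℕ) := by
    intro i hik s
    rw [Nat.mul_div_cancel _ (Nat.two_pow_pos _), Nat.mod_eq_of_lt s.isLt]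
  have hpj : ∀ x : ℕ, pIdx k j hjk (x ^^^ 2 ^ (k - 1 - j)) = pIdx k j hjk x :=
    fun x => pIdx_congr hjk (pref_xor_of_le hjk le_rfl)
  have hplt : ∀ (i : ℕ) (hi : i < k), i < j → ∀ x : ℕ,
      pIdx k i hi (x ^^^ 2 ^ (k - 1 - j)) = pIdx k i hi x :=
    fun i hi hij x => pIdx_congr hi (pref_xor_of_le hjk (le_of_lt hij))
  have hxe : ∀ x : ℕ, (x ^^^ 2 ^ (k - 1 - j)) ^^^ 2 ^ (k - 1 - j) = x :=
    fun x => xor_cancel_right _ _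
  apply Finset.card_nbij' (phiMap k j S true) (phiMap k j S false)
  -- Φ maps ν-event into μ-event
  · intro a ha
    rw [Finset.mem_coe, Finset.mem_filter] at ha ⊢
    obtain ⟨hab, hev⟩ := ha
    have haa : ∀ p, a p ≤ m - 2 := by
      intro p
      have := Fintype.mem_piFinset.1 hab p
      rw [Finset.mem_range] at this
      omega
    have hex : ∀ x ∈ S, ∀ (i : ℕ) (hi : i < k),
        a (pIdx k i hi (x ^^^ 2 ^ (k - 1 - j)))
          + ((x ^^^ 2 ^ (k - 1 - j)).testBit (k - 1 - i)).toNat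
          = α x / m ^ (k - 1 - i) % m := fun x hx i hi =>
      (digitFun_eq_iff hm haa _ (hval x hx)).1 (hev x hx) i hi
    have hexj : ∀ x ∈ S, a (pIdx k j hjk x) + (!x.testBit (k - 1 - j)).toNat
        = α x / m ^ (k - 1 - j) % m := by
      intro x hx
      have h1 := hex x hx j hjk
      rwa [hbitj x, hpj x] at h1
    have hbox : ∀ p, phiMap k j S true a p < m - 1 := by
      intro p
      obtain ⟨⟨i, hik⟩, s⟩ := p
      rcases Nat.lt_trichotomy i j with h | h | h
      · have hps : (⟨⟨i, hik⟩, s⟩ : PrefixIdx k) = pIdx k i hik ((s : ℕ) * 2 ^ (k - i)) :=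
          (pIdx_eq_mk hik (hrep i hik s)).symm
        rw [hps, phiMap_lt S true a hik h]
        have := haa (pIdx k i hik ((s : ℕ) * 2 ^ (k - i))); omega
      · subst h
        have hps : (⟨⟨i, hik⟩, s⟩ : PrefixIdx k) = pIdx k i hjk ((s : ℕ) * 2 ^ (k - i)) :=
          (pIdx_eq_mk hjk (hrep i hik s)).symm
        rw [hps]
        by_cases hcon : ∃ z ∈ S, z / 2 ^ (k - i) % 2 ^ i
            = ((s : ℕ) * 2 ^ (k - i)) / 2 ^ (k - i) % 2 ^ i
        · obtain ⟨z, hz, hzp⟩ := hcon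
          rw [← pIdx_congr hjk hzp, phiMap_eqj hjk true a hz hu]
          have h1 := hexj z hz
          have h2 := hd z hz i hjk
          have h3 := haa (pIdx k i hjk z)
          cases hb : z.testBit (k - 1 - i) <;> simp [hb] at h1 ⊢ <;> omega
        · rw [phiMap_eqj_free hjk true a hcon]
          have := haa (pIdx k i hjk ((s : ℕ) * 2 ^ (k - i))); omega
      · have hps : (⟨⟨i, hik⟩, s⟩ : PrefixIdx k) = pIdx k i hik ((s : ℕ) * 2 ^ (k - i)) :=
          (pIdx_eq_mk hik (hrep i hik s)).symm
        rw [hps, phiMap_gt hjk S true a hik h]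
        have := haa (pIdx k i hik (((s : ℕ) * 2 ^ (k - i)) ^^^ 2 ^ (k - 1 - j))); omega
    have hΦa : ∀ p, phiMap k j S true a p ≤ m - 2 := fun p => by have := hbox p; omega
    refine ⟨Fintype.mem_piFinset.2 fun p => Finset.mem_range.2 (hbox p), ?_⟩
    intro x hx
    rw [digitFun_eq_iff hm hΦa _ (hval x hx)]
    intro i hi
    rcases Nat.lt_trichotomy i j with h | h | h
    · rw [phiMap_lt S true a hi h, ← hplt i hi h x, ← hbitne x i hi (by omega)]
      exact hex x hx i hi
    · subst h
      have hglue : pIdx k i hjk x = pIdx k i hi x := rfl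
      rw [← hglue, phiMap_eqj hjk true a hx hu]
      have h1 := hexj x hx
      have h2 := hd x hx i hjk
      cases hb : x.testBit (k - 1 - i) <;> simp [hb] at h1 ⊢ <;> omega
    · rw [phiMap_gt hjk S true a hi h, ← hbitne x i hi (by omega)]
      exact hex x hx i hi
  -- Ψ maps μ-event into ν-event
  · intro a ha
    rw [Finset.mem_coe, Finset.mem_filter] at ha ⊢
    obtain ⟨hab, hev⟩ := ha
    have haa : ∀ p, a p ≤ m - 2 := by
      intro p
      have := Fintype.mem_piFinset.1 hab p
      rw [Finset.mem_range] at this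
      omega
    have hex : ∀ x ∈ S, ∀ (i : ℕ) (hi : i < k),
        a (pIdx k i hi x) + (x.testBit (k - 1 - i)).toNat
          = α x / m ^ (k - 1 - i) % m := fun x hx i hi =>
      (digitFun_eq_iff hm haa _ (hval x hx)).1 (hev x hx) i hi
    have hbox : ∀ p, phiMap k j S false a p < m - 1 := by
      intro p
      obtain ⟨⟨i, hik⟩, s⟩ := p
      rcases Nat.lt_trichotomy i j with h | h | h
      · have hps : (⟨⟨i, hik⟩, s⟩ : PrefixIdx k) = pIdx k i hik ((s : ℕ) * 2 ^ (k - i)) :=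
          (pIdx_eq_mk hik (hrep i hik s)).symm
        rw [hps, phiMap_lt S false a hik h]
        have := haa (pIdx k i hik ((s : ℕ) * 2 ^ (k - i))); omega
      · subst h
        have hps : (⟨⟨i, hik⟩, s⟩ : PrefixIdx k) = pIdx k i hjk ((s : ℕ) * 2 ^ (k - i)) :=
          (pIdx_eq_mk hjk (hrep i hik s)).symm
        rw [hps]
        by_cases hcon : ∃ z ∈ S, z / 2 ^ (k - i) % 2 ^ i
            = ((s : ℕ) * 2 ^ (k - i)) / 2 ^ (k - i) % 2 ^ i
        · obtain ⟨z, hz, hzp⟩ := hcon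
          rw [← pIdx_congr hjk hzp, phiMap_eqj hjk false a hz hu]
          have h1 := hex z hz i hjk
          have h2 := hd z hz i hjk
          have h3 := haa (pIdx k i hjk z)
          cases hb : z.testBit (k - 1 - i) <;> simp [hb] at h1 ⊢ <;> omega
        · rw [phiMap_eqj_free hjk false a hcon]
          have := haa (pIdx k i hjk ((s : ℕ) * 2 ^ (k - i))); omega
      · have hps : (⟨⟨i, hik⟩, s⟩ : PrefixIdx k) = pIdx k i hik ((s : ℕ) * 2 ^ (k - i)) :=
          (pIdx_eq_mk hik (hrep i hik s)).symm
        rw [hps, phiMap_gt hjk S false a hik h]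
        have := haa (pIdx k i hik (((s : ℕ) * 2 ^ (k - i)) ^^^ 2 ^ (k - 1 - j))); omega
    have hΨa : ∀ p, phiMap k j S false a p ≤ m - 2 := fun p => by have := hbox p; omega
    refine ⟨Fintype.mem_piFinset.2 fun p => Finset.mem_range.2 (hbox p), ?_⟩
    intro x hx
    rw [digitFun_eq_iff hm hΨa _ (hval x hx)]
    intro i hi
    rcases Nat.lt_trichotomy i j with h | h | h
    · rw [hplt i hi h x, phiMap_lt S false a hi h, hbitne x i hi (by omega)]
      exact hex x hx i hi
    · subst h
      have hglue2 : pIdx k i hjk (x ^^^ 2 ^ (k - 1 - i)) = pIdx k i hi (x ^^^ 2 ^ (k - 1 - i)) := rfl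
      rw [← hglue2, hpj x, phiMap_eqj hjk false a hx hu, hbitj x]
      have h1 := hex x hx i hjk
      have h2 := hd x hx i hjk
      cases hb : x.testBit (k - 1 - i) <;> simp [hb] at h1 ⊢ <;> omega
    · rw [phiMap_gt hjk S false a hi h, hxe x, hbitne x i hi (by omega)]
      exact hex x hx i hi
  -- Ψ ∘ Φ = id on the ν-event
  · intro a ha
    rw [Finset.mem_coe, Finset.mem_filter] at ha
    obtain ⟨hab, hev⟩ := ha
    have haa : ∀ p, a p ≤ m - 2 := by
      intro p
      have := Fintype.mem_piFinset.1 hab p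
      rw [Finset.mem_range] at this
      omega
    have hexj : ∀ x ∈ S, a (pIdx k j hjk x) + (!x.testBit (k - 1 - j)).toNat
        = α x / m ^ (k - 1 - j) % m := by
      intro x hx
      have h1 := (digitFun_eq_iff hm haa _ (hval x hx)).1 (hev x hx) j hjk
      rwa [hbitj x, hpj x] at h1
    funext p
    obtain ⟨⟨i, hik⟩, s⟩ := p
    rcases Nat.lt_trichotomy i j with h | h | h
    · have hps : (⟨⟨i, hik⟩, s⟩ : PrefixIdx k) = pIdx k i hik ((s : ℕ) * 2 ^ (k - i)) :=
        (pIdx_eq_mk hik (hrep i hik s)).symm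
      rw [hps, phiMap_lt S false _ hik h, phiMap_lt S true a hik h]
    · subst h
      have hps : (⟨⟨i, hik⟩, s⟩ : PrefixIdx k) = pIdx k i hjk ((s : ℕ) * 2 ^ (k - i)) :=
        (pIdx_eq_mk hjk (hrep i hik s)).symm
      rw [hps]
      by_cases hcon : ∃ z ∈ S, z / 2 ^ (k - i) % 2 ^ i
          = ((s : ℕ) * 2 ^ (k - i)) / 2 ^ (k - i) % 2 ^ i
      · obtain ⟨z, hz, hzp⟩ := hcon
        rw [← pIdx_congr hjk hzp, phiMap_eqj hjk false _ hz hu,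
          phiMap_eqj hjk true a hz hu]
        have h1 := hexj z hz
        have h2 := hd z hz i hjk
        cases hb : z.testBit (k - 1 - i) <;> simp [hb] at h1 ⊢ <;> omega
      · rw [phiMap_eqj_free hjk false _ hcon, phiMap_eqj_free hjk true a hcon]
    · have hps : (⟨⟨i, hik⟩, s⟩ : PrefixIdx k) = pIdx k i hik ((s : ℕ) * 2 ^ (k - i)) :=
        (pIdx_eq_mk hik (hrep i hik s)).symm
      rw [hps, phiMap_gt hjk S false _ hik h, phiMap_gt hjk S true a hik h, hxe]
  -- Φ ∘ Ψ = id on the μ-event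
  · intro a ha
    rw [Finset.mem_coe, Finset.mem_filter] at ha
    obtain ⟨hab, hev⟩ := ha
    have haa : ∀ p, a p ≤ m - 2 := by
      intro p
      have := Fintype.mem_piFinset.1 hab p
      rw [Finset.mem_range] at this
      omega
    have hexj : ∀ x ∈ S, a (pIdx k j hjk x) + (x.testBit (k - 1 - j)).toNat
        = α x / m ^ (k - 1 - j) % m := fun x hx =>
      (digitFun_eq_iff hm haa _ (hval x hx)).1 (hev x hx) j hjk
    funext p
    obtain ⟨⟨i, hik⟩, s⟩ := p
    rcases Nat.lt_trichotomy i j with h | h | h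
    · have hps : (⟨⟨i, hik⟩, s⟩ : PrefixIdx k) = pIdx k i hik ((s : ℕ) * 2 ^ (k - i)) :=
        (pIdx_eq_mk hik (hrep i hik s)).symm
      rw [hps, phiMap_lt S true _ hik h, phiMap_lt S false a hik h]
    · subst h
      have hps : (⟨⟨i, hik⟩, s⟩ : PrefixIdx k) = pIdx k i hjk ((s : ℕ) * 2 ^ (k - i)) :=
        (pIdx_eq_mk hjk (hrep i hik s)).symm
      rw [hps]
      by_cases hcon : ∃ z ∈ S, z / 2 ^ (k - i) % 2 ^ i
          = ((s : ℕ) * 2 ^ (k - i)) / 2 ^ (k - i) % 2 ^ i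
      · obtain ⟨z, hz, hzp⟩ := hcon
        rw [← pIdx_congr hjk hzp, phiMap_eqj hjk true _ hz hu,
          phiMap_eqj hjk false a hz hu]
        have h1 := hexj z hz
        have h2 := hd z hz i hjk
        cases hb : z.testBit (k - 1 - i) <;> simp [hb] at h1 ⊢ <;> omega
      · rw [phiMap_eqj_free hjk true _ hcon, phiMap_eqj_free hjk false a hcon]
    · have hps : (⟨⟨i, hik⟩, s⟩ : PrefixIdx k) = pIdx k i hik ((s : ℕ) * 2 ^ (k - i)) :=
        (pIdx_eq_mk hik (hrep i hik s)).symm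
      rw [hps, phiMap_gt hjk S true _ hik h, phiMap_gt hjk S false a hik h, hxe]

lemma box_nonempty (m k : ℕ) (hm : 2 ≤ m) :
    (Fintype.piFinset fun _ : PrefixIdx k => Finset.range (m - 1)).Nonempty :=
  Fintype.piFinset_nonempty.2 fun _ => ⟨0, Finset.mem_range.2 (by omega)⟩

lemma toOM (m k : ℕ) (hm : 2 ≤ m) (S : Finset ℕ) (α : ℕ → ℕ)
    (F : (PrefixIdx k → ℕ) → (ℕ → ℕ)) :
    ((aDist m k).map F).toOuterMeasure {f | ∀ x ∈ S, f x = α x}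
      = (((Fintype.piFinset fun _ : PrefixIdx k => Finset.range (m - 1)).filter
          fun a => ∀ x ∈ S, F a x = α x).card : ℝ≥0∞)
        / ((Fintype.piFinset fun _ : PrefixIdx k => Finset.range (m - 1)).card : ℝ≥0∞) := by
  classical
  rw [aDist, dif_pos (box_nonempty m k hm), PMF.toOuterMeasure_map_apply,
    PMF.toOuterMeasure_uniformOfFinset_apply]
  congr 2
  have : ((Fintype.piFinset fun _ : PrefixIdx k => Finset.range (m - 1)).filter
      fun x => x ∈ F ⁻¹' {f | ∀ x ∈ S, f x = α x})
      = (Fintype.piFinset fun _ : PrefixIdx k => Finset.range (m - 1)).filter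
        fun a => ∀ x ∈ S, F a x = α x :=
    Finset.filter_congr fun a _ => by simp [Set.mem_preimage, Set.mem_setOf_eq]
  rw [this]


/-- For every good assignment `α : S → [m^k]` of weight at most `k/2`,
`Pr_{f~μ}[f agrees with α] ≤ 2 · Pr_{g~ν}[g agrees with α]`. -/
theorem stmt13 (m k : ℕ) (hm : 2 ≤ m) (hk : 0 < k)
    (S : Finset ℕ) (hS : ∀ x ∈ S, x < 2 ^ k) (α : ℕ → ℕ)
    (hval : ∀ x ∈ S, α x < m ^ k)
    (hgood : ∀ x ∈ S, GoodVal m k (α x))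
    (hw : (S.card : ℝ) ≤ k / 2) :
    ((aDist m k).map (digitFun m k)).toOuterMeasure {f | ∀ x ∈ S, f x = α x} ≤
      2 * (nuMix m k).toOuterMeasure {g | ∀ x ∈ S, g x = α x} := by
  classical
  set box := Fintype.piFinset fun _ : PrefixIdx k => Finset.range (m - 1) with hboxdef
  set N : ℝ≥0∞ := (box.card : ℝ≥0∞) with hN
  set cnt : ℕ → ℕ := fun j => ((box.filter
    fun a => ∀ x ∈ S, digitFun m k a (x ^^^ 2 ^ (k - 1 - j)) = α x)).card with hcnt
  set cmu : ℕ := ((box.filter fun a => ∀ x ∈ S, digitFun m k a x = α x)).card with hcmu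
  -- 2 |S| ≤ k
  have hw2 : 2 * S.card ≤ k := by
    have : (2 : ℝ) * S.card ≤ k := by linarith
    exact_mod_cast this
  -- left side
  have hμ : ((aDist m k).map (digitFun m k)).toOuterMeasure {f | ∀ x ∈ S, f x = α x}
      = (cmu : ℝ≥0∞) / N := toOM m k hm S α (digitFun m k)
  -- uncut levels
  have hudef : ∀ j, j < k → j ∉ cutSet k S → ∀ x ∈ S, ∀ y ∈ S,
      x / 2 ^ (k - j) % 2 ^ j = y / 2 ^ (k - j) % 2 ^ j →
      x.testBit (k - 1 - j) = y.testBit (k - 1 - j) := by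
    intro j hjk hnc x hx y hy hpref
    by_contra hne
    apply hnc
    have hxlt : x / 2 ^ (k - j) < 2 ^ j := by
      rw [Nat.div_lt_iff_lt_mul (Nat.two_pow_pos _)]
      calc x < 2 ^ k := hS x hx
        _ = 2 ^ j * 2 ^ (k - j) := by rw [← pow_add]; congr 1; omega
    have hylt : y / 2 ^ (k - j) < 2 ^ j := by
      rw [Nat.div_lt_iff_lt_mul (Nat.two_pow_pos _)]
      calc y < 2 ^ k := hS y hy
        _ = 2 ^ j * 2 ^ (k - j) := by rw [← pow_add]; congr 1; omega
    have hdiv : x / 2 ^ (k - j) = y / 2 ^ (k - j) := by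
      rw [← Nat.mod_eq_of_lt hxlt, ← Nat.mod_eq_of_lt hylt]
      exact hpref
    simp only [cutSet, Finset.mem_filter, Finset.mem_range]
    exact ⟨hjk, x, hx, y, hy, hdiv, hne⟩
  have hcEq : ∀ j ∈ Finset.range k \ cutSet k S, cnt j = cmu := by
    intro j hj
    rw [Finset.mem_sdiff, Finset.mem_range] at hj
    exact card_filter_eq m k j hm hj.1 S hS α hval hgood (hudef j hj.1 hj.2)
  -- counting uncut levels
  have hsub : cutSet k S ⊆ Finset.range k := Finset.filter_subset _ _
  have hcut_le : (cutSet k S).card ≤ S.card - 1 := cutSet_card_le k S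
  have hcut_lt : (cutSet k S).card ≤ k := le_trans (Finset.card_le_card hsub) (by simp)
  have hcard_sdiff : (Finset.range k \ cutSet k S).card = k - (cutSet k S).card := by
    rw [Finset.card_sdiff_of_subset hsub, Finset.card_range]
  have hkc : k ≤ 2 * (Finset.range k \ cutSet k S).card := by
    rw [hcard_sdiff]; omega
  -- right side
  have hranne : (Finset.range k).Nonempty := ⟨0, Finset.mem_range.2 hk⟩
  have hν : (nuMix m k).toOuterMeasure {g | ∀ x ∈ S, g x = α x}
      = ∑ j ∈ Finset.range k, (k : ℝ≥0∞)⁻¹ * ((cnt j : ℝ≥0∞) / N) := by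
    rw [nuMix, dif_pos hranne, PMF.toOuterMeasure_bind_apply]
    rw [tsum_eq_sum (s := Finset.range k)
      (fun j hj => by simp [PMF.uniformOfFinset_apply, hj])]
    apply Finset.sum_congr rfl
    intro j hj
    rw [PMF.uniformOfFinset_apply, if_pos hj, Finset.card_range,
      toOM m k hm S α (fun a x => digitFun m k a (x ^^^ 2 ^ (k - 1 - j)))]
  rw [hμ, hν]
  set P : ℝ≥0∞ := (cmu : ℝ≥0∞) / N with hP
  set c : ℕ := (Finset.range k \ cutSet k S).card with hc
  have hlow : (c : ℝ≥0∞) * ((k : ℝ≥0∞)⁻¹ * P)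
      ≤ ∑ j ∈ Finset.range k, (k : ℝ≥0∞)⁻¹ * ((cnt j : ℝ≥0∞) / N) := by
    calc (c : ℝ≥0∞) * ((k : ℝ≥0∞)⁻¹ * P)
        = ∑ _j ∈ Finset.range k \ cutSet k S, (k : ℝ≥0∞)⁻¹ * P := by
          rw [Finset.sum_const, nsmul_eq_mul]
      _ = ∑ j ∈ Finset.range k \ cutSet k S, (k : ℝ≥0∞)⁻¹ * ((cnt j : ℝ≥0∞) / N) := by
          apply Finset.sum_congr rfl
          intro j hj
          rw [hcEq j hj]
      _ ≤ ∑ j ∈ Finset.range k, (k : ℝ≥0∞)⁻¹ * ((cnt j : ℝ≥0∞) / N) :=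
          Finset.sum_le_sum_of_subset (Finset.sdiff_subset)
  have hone : (1 : ℝ≥0∞) ≤ 2 * ((c : ℝ≥0∞) * (k : ℝ≥0∞)⁻¹) := by
    have hkk : (k : ℝ≥0∞) * (k : ℝ≥0∞)⁻¹ = 1 :=
      ENNReal.mul_inv_cancel (by simp; omega) (ENNReal.natCast_ne_top k)
    have h1 : (k : ℝ≥0∞) ≤ ((2 * c : ℕ) : ℝ≥0∞) := Nat.cast_le.2 hkc
    calc (1 : ℝ≥0∞) = (k : ℝ≥0∞) * (k : ℝ≥0∞)⁻¹ := hkk.symm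
      _ ≤ ((2 * c : ℕ) : ℝ≥0∞) * (k : ℝ≥0∞)⁻¹ := mul_le_mul_left h1 _
      _ = 2 * ((c : ℝ≥0∞) * (k : ℝ≥0∞)⁻¹) := by push_cast; ring
  calc P = 1 * P := (one_mul P).symm
    _ ≤ (2 * ((c : ℝ≥0∞) * (k : ℝ≥0∞)⁻¹)) * P := mul_le_mul_left hone P
    _ = 2 * ((c : ℝ≥0∞) * ((k : ℝ≥0∞)⁻¹ * P)) := by ring
    _ ≤ 2 * ∑ j ∈ Finset.range k, (k : ℝ≥0∞)⁻¹ * ((cnt j : ℝ≥0∞) / N) :=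
        mul_le_mul_right hlow 2
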